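/- Let n ≥ 2. Every maximal nilpotent subsemigroup of Q_n (i.e. every maximal element, with respect to inclusion, of the set of all nilpotent subsemigroups of Q_n) has nilpotency class n-1, and any two maximal nilpotent subsemigroups of Q_n are isomorphic as semigroups. -/

import Mathlib

namespace NilSg

variable {M : Type*}

/-- `T ⊆ M` is closed under multiplication. -/
def IsSubsg [Mul M] (T : Set M) : Prop :=
  ∀ ⦃a⦄, a ∈ T → ∀ ⦃b⦄, b ∈ T → a * b ∈ T

/-- Every product of exactly `k` elements of `T` equals `z`
(such products are the products of nonempty lists `a :: l` of elements of `T`). -/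
def ProdEq [Mul M] (z : M) (T : Set M) (k : ℕ) : Prop :=
  ∀ (a : M) (l : List M), a ∈ T → (∀ x ∈ l, x ∈ T) → l.length + 1 = k →
    l.foldl (· * ·) a = z

/-- `T` is a nilpotent subsemigroup with respect to the zero element `z`. -/
def IsNilSubsg [Mul M] (z : M) (T : Set M) : Prop :=
  IsSubsg T ∧ ∃ k, 0 < k ∧ ProdEq z T k

/-- The nilpotency class of `T`: the minimal `k ≥ 1` such that every product of `k`
elements of `T` equals `z`. -/
noncomputable def nilClass [Mul M] (z : M) (T : Set M) : ℕ :=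
  sInf {k | 0 < k ∧ ProdEq z T k}

/-- `T` is a nilpotent subsemigroup of `S` (with zero `z`). -/
def NilIn [Mul M] (z : M) (S : Set M) (T : Set M) : Prop :=
  T ⊆ S ∧ IsNilSubsg z T

/-- `T` is a nilpotent subsemigroup of `S` (with zero `z`) of nilpotency class at most `k`. -/
def NilLe [Mul M] (z : M) (S : Set M) (k : ℕ) (T : Set M) : Prop :=
  T ⊆ S ∧ IsNilSubsg z T ∧ nilClass z T ≤ k

/-- `Ω n`: the semigroup of `n × n` real matrices with nonnegative entries. -/
def Omega (n : ℕ) : Set (Matrix (Fin n) (Fin n) ℝ) :=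
  {A | ∀ i j, 0 ≤ A i j}

/-- `Q n`: the semigroup of `n × n` real matrices all of whose row sums and
column sums equal `1`. -/
def Qset (n : ℕ) : Set (Matrix (Fin n) (Fin n) ℝ) :=
  {A | (∀ i, ∑ j, A i j = 1) ∧ (∀ j, ∑ i, A i j = 1)}

/-- `D n`: the semigroup of `n × n` doubly stochastic real matrices. -/
def Dset (n : ℕ) : Set (Matrix (Fin n) (Fin n) ℝ) :=
  {A | (∀ i j, 0 ≤ A i j) ∧ (∀ i, ∑ j, A i j = 1) ∧ (∀ j, ∑ i, A i j = 1)}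

/-- The matrix all of whose entries equal `1/n`: the zero element of `Q n` and `D n`. -/
noncomputable def On (n : ℕ) : Matrix (Fin n) (Fin n) ℝ :=
  Matrix.of fun _ _ => (n : ℝ)⁻¹

/-- The hyperplane `V` of all vectors whose coordinates sum to `0`. -/
def Vsub (n : ℕ) : Submodule ℝ (Fin n → ℝ) where
  carrier := {x | ∑ i, x i = 0}
  add_mem' := by
    intro a b ha hb
    simp only [Set.mem_setOf_eq, Pi.add_apply] at *
    simp [Finset.sum_add_distrib, ha, hb]
  zero_mem' := by simp
  smul_mem' := by
    intro c x hx
    simp only [Set.mem_setOf_eq, Pi.smul_apply, smul_eq_mul] at *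
    simp [← Finset.mul_sum, hx]


open Matrix Module Submodule

variable {n : ℕ}

lemma mem_Vsub_iff {x : Fin n → ℝ} : x ∈ Vsub n ↔ ∑ i, x i = 0 := Iff.rfl

lemma Qmul_mem {A B : Matrix (Fin n) (Fin n) ℝ} (hA : A ∈ Qset n) (hB : B ∈ Qset n) :
    A * B ∈ Qset n := by
  constructor
  · intro i
    simp only [Matrix.mul_apply]
    rw [Finset.sum_comm]
    calc ∑ k, ∑ j, A i k * B k j = ∑ k, A i k * ∑ j, B k j := by
          simp [Finset.mul_sum]
      _ = 1 := by simp [hB.1, hA.1 i]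
  · intro j
    simp only [Matrix.mul_apply]
    rw [Finset.sum_comm]
    calc ∑ k, ∑ i, A i k * B k j = ∑ k, (∑ i, A i k) * B k j := by
          simp [Finset.sum_mul]
      _ = 1 := by simp [hA.2, hB.2 j]

lemma On_mem_Qset (hn : 1 ≤ n) : On n ∈ Qset n := by
  have h0 : (n : ℝ) ≠ 0 := by positivity
  constructor <;> intro i <;> simp [On, Finset.sum_const, h0]

lemma On_mul {A : Matrix (Fin n) (Fin n) ℝ} (hA : A ∈ Qset n) : On n * A = On n := by
  ext i j
  simp only [Matrix.mul_apply, On, Matrix.of_apply]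
  rw [← Finset.mul_sum, hA.2 j, mul_one]

lemma Qmem_mulVec_one {A : Matrix (Fin n) (Fin n) ℝ} (hA : A ∈ Qset n) :
    A.mulVec (fun _ => 1) = fun _ => 1 := by
  funext i
  simp [Matrix.mulVec, dotProduct, hA.1 i]

lemma Qmem_sum_mulVec {A : Matrix (Fin n) (Fin n) ℝ} (hA : A ∈ Qset n) (x : Fin n → ℝ) :
    ∑ i, A.mulVec x i = ∑ j, x j := by
  simp only [Matrix.mulVec, dotProduct]
  rw [Finset.sum_comm]
  calc ∑ j, ∑ i, A i j * x j = ∑ j, (∑ i, A i j) * x j := by simp [Finset.sum_mul]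
    _ = ∑ j, x j := by simp [hA.2]

lemma Qmem_mulVec_mem_Vsub {A : Matrix (Fin n) (Fin n) ℝ} (hA : A ∈ Qset n)
    {v : Fin n → ℝ} (hv : v ∈ Vsub n) : A.mulVec v ∈ Vsub n := by
  rw [mem_Vsub_iff, Qmem_sum_mulVec hA]; exact hv

lemma On_mulVec_eq_zero {v : Fin n → ℝ} (hv : v ∈ Vsub n) : (On n).mulVec v = 0 := by
  funext i
  simp only [Matrix.mulVec, dotProduct, On, Matrix.of_apply, Pi.zero_apply]
  rw [← Finset.mul_sum, mem_Vsub_iff.mp hv, mul_zero]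

lemma eq_of_mulVec_eqOn (hn : 1 ≤ n) {A B : Matrix (Fin n) (Fin n) ℝ}
    (hA : A ∈ Qset n) (hB : B ∈ Qset n)
    (h : ∀ v ∈ Vsub n, A.mulVec v = B.mulVec v) : A = B := by
  have hmain : ∀ x, A.mulVec x = B.mulVec x := by
    intro x
    have h0 : (n : ℝ) ≠ 0 := by positivity
    set c : ℝ := (∑ i, x i) / n with hc
    have hv : (x - fun _ => c) ∈ Vsub n := by
      rw [mem_Vsub_iff]
      simp only [Pi.sub_apply]
      rw [Finset.sum_sub_distrib]
      simp [hc, Finset.sum_const, Finset.card_univ]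
      field_simp
      ring
    have hconst : ∀ C ∈ Qset n, C.mulVec (fun _ => c) = fun _ => c := by
      intro C hC
      have : (fun _ : Fin n => c) = c • (fun _ : Fin n => (1:ℝ)) := by
        funext i; simp
      rw [this, Matrix.mulVec_smul, Qmem_mulVec_one hC]
    have hx : x = (fun _ => c) + (x - fun _ => c) := by
      funext i; simp
    calc A.mulVec x = A.mulVec ((fun _ => c) + (x - fun _ => c)) := by rw [← hx]
      _ = A.mulVec (fun _ => c) + A.mulVec (x - fun _ => c) := by rw [Matrix.mulVec_add]
      _ = (fun _ => c) + B.mulVec (x - fun _ => c) := by rw [hconst A hA, h _ hv]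
      _ = B.mulVec (fun _ => c) + B.mulVec (x - fun _ => c) := by rw [hconst B hB]
      _ = B.mulVec x := by rw [← Matrix.mulVec_add, ← hx]
  apply Matrix.toLin'.injective
  exact LinearMap.ext fun x => by simp [Matrix.toLin'_apply, hmain x]

lemma eq_On_of_killV (hn : 1 ≤ n) {A : Matrix (Fin n) (Fin n) ℝ} (hA : A ∈ Qset n)
    (h : ∀ v ∈ Vsub n, A.mulVec v = 0) : A = On n :=
  eq_of_mulVec_eqOn hn hA (On_mem_Qset hn) fun v hv => by
    rw [h v hv, On_mulVec_eq_zero hv]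

lemma finrank_Vsub (hn : 1 ≤ n) : finrank ℝ (Vsub n) = n - 1 := by
  have h0 : (n : ℝ) ≠ 0 := by positivity
  set φ : (Fin n → ℝ) →ₗ[ℝ] ℝ :=
    { toFun := fun x => ∑ i, x i
      map_add' := by intro a b; simp [Finset.sum_add_distrib]
      map_smul' := by intro c x; simp [← Finset.mul_sum] } with hφ
  have hker : Vsub n = LinearMap.ker φ := by
    ext x; simp [mem_Vsub_iff, hφ, LinearMap.mem_ker]
  have hsurj : LinearMap.range φ = ⊤ := by
    rw [LinearMap.range_eq_top]
    intro c
    exact ⟨fun _ => c / n, by simp [hφ]; field_simp⟩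
  have := LinearMap.finrank_range_add_finrank_ker φ
  rw [hsurj] at this
  simp only [finrank_top, finrank_self] at this
  rw [hker]
  have hfr : finrank ℝ (Fin n → ℝ) = n := by simp
  omega


lemma foldl_mul_assoc {S : Type*} [Semigroup S] (x a : S) (l : List S) :
    l.foldl (· * ·) (x * a) = x * l.foldl (· * ·) a := by
  induction l generalizing a with
  | nil => simp
  | cons b l ih => simp only [List.foldl_cons]; rw [mul_assoc, ih]

lemma foldl_replicate {S : Type*} [Monoid S] (a : S) (j : ℕ) :
    (List.replicate j a).foldl (· * ·) a = a ^ (j + 1) := by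
  suffices h : ∀ b : S, (List.replicate j a).foldl (· * ·) b = b * a ^ j by
    rw [h a, ← pow_succ']
  induction j with
  | zero => intro b; simp
  | succ j ih =>
    intro b
    rw [List.replicate_succ, List.foldl_cons, ih, pow_succ', ← mul_assoc]

lemma ProdEq_succ {T : Set (Matrix (Fin n) (Fin n) ℝ)} (hT : T ⊆ Qset n) {k : ℕ}
    (hk : 1 ≤ k) (h : ProdEq (On n) T k) : ProdEq (On n) T (k + 1) := by
  intro a l ha hl hlen
  rcases List.eq_nil_or_concat l with rfl | ⟨L, b, rfl⟩
  · simp at hlen; omega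
  · rw [List.concat_eq_append, List.foldl_append]
    simp only [List.foldl_cons, List.foldl_nil]
    have hb : b ∈ T := hl b (by simp)
    have hL : ∀ x ∈ L, x ∈ T := fun x hx => hl x (by simp [hx])
    have hlen' : L.length + 1 = k := by simp at hlen; omega
    rw [h a L ha hL hlen', On_mul (hT hb)]

lemma ProdEq_mono {T : Set (Matrix (Fin n) (Fin n) ℝ)} (hT : T ⊆ Qset n) {k j : ℕ}
    (hk : 1 ≤ k) (hkj : k ≤ j) (h : ProdEq (On n) T k) : ProdEq (On n) T j := by
  induction j with
  | zero => omega
  | succ j ih =>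
    rcases Nat.lt_or_ge k (j+1) with hlt | hge
    · exact ProdEq_succ hT (by omega) (ih (by omega))
    · have : k = j + 1 := by omega
      rwa [← this]

/-- The span of images of `W` under all matrices in `S`. -/
def stepU (S : Set (Matrix (Fin n) (Fin n) ℝ)) (W : Submodule ℝ (Fin n → ℝ)) :
    Submodule ℝ (Fin n → ℝ) :=
  ⨆ A ∈ S, W.map (Matrix.mulVecLin A)

def Uchain (S : Set (Matrix (Fin n) (Fin n) ℝ)) (j : ℕ) : Submodule ℝ (Fin n → ℝ) :=
  (stepU S)^[j] (Vsub n)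

lemma Uchain_zero (S : Set (Matrix (Fin n) (Fin n) ℝ)) : Uchain S 0 = Vsub n := rfl

lemma Uchain_succ (S : Set (Matrix (Fin n) (Fin n) ℝ)) (j : ℕ) :
    Uchain S (j + 1) = stepU S (Uchain S j) := Function.iterate_succ_apply' _ _ _

lemma mem_stepU {S : Set (Matrix (Fin n) (Fin n) ℝ)} {A : Matrix (Fin n) (Fin n) ℝ}
    (hA : A ∈ S) {W : Submodule ℝ (Fin n → ℝ)} {v : Fin n → ℝ} (hv : v ∈ W) :
    A.mulVec v ∈ stepU S W := by
  have h1 : W.map (Matrix.mulVecLin A) ≤ stepU S W := by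
    apply le_iSup₂ (f := fun A (_ : A ∈ S) => W.map (Matrix.mulVecLin A)) A hA
  exact h1 ⟨v, hv, by simp [Matrix.mulVecLin_apply]⟩

lemma stepU_le {S : Set (Matrix (Fin n) (Fin n) ℝ)} {W W' : Submodule ℝ (Fin n → ℝ)}
    (h : ∀ A ∈ S, W.map (Matrix.mulVecLin A) ≤ W') : stepU S W ≤ W' := iSup₂_le h

lemma stepU_mono (S : Set (Matrix (Fin n) (Fin n) ℝ)) {W W' : Submodule ℝ (Fin n → ℝ)}
    (h : W ≤ W') : stepU S W ≤ stepU S W' := by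
  apply stepU_le
  intro A hA
  exact le_trans (Submodule.map_mono h) (by
    apply le_iSup₂ (f := fun A (_ : A ∈ S) => W'.map (Matrix.mulVecLin A)) A hA)

lemma Uchain_antitone {S : Set (Matrix (Fin n) (Fin n) ℝ)} (hS : S ⊆ Qset n) :
    ∀ j, Uchain S (j + 1) ≤ Uchain S j := by
  intro j
  induction j with
  | zero =>
    rw [Uchain_succ, Uchain_zero]
    apply stepU_le
    intro A hA
    rintro x ⟨v, hv, rfl⟩
    exact Qmem_mulVec_mem_Vsub (hS hA) hv
  | succ j ih =>
    have := stepU_mono S ih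
    rwa [← Uchain_succ, ← Uchain_succ] at this

lemma Uchain_le {S : Set (Matrix (Fin n) (Fin n) ℝ)} (hS : S ⊆ Qset n) {j k : ℕ}
    (hjk : j ≤ k) : Uchain S k ≤ Uchain S j := by
  induction k with
  | zero => simp_all
  | succ k ih =>
    rcases Nat.lt_or_ge j (k+1) with hlt | hge
    · exact le_trans (Uchain_antitone hS k) (ih (by omega))
    · have : j = k + 1 := by omega
      rw [this]

/-- products of exactly `l.length+1` members applied to a chain member land deeper. -/
lemma foldl_mulVec_mem {T : Set (Matrix (Fin n) (Fin n) ℝ)}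
    {μ : ℕ → Submodule ℝ (Fin n → ℝ)}
    (hμ : ∀ A ∈ T, ∀ j, ∀ v ∈ μ j, A.mulVec v ∈ μ (j + 1)) :
    ∀ (l : List (Matrix (Fin n) (Fin n) ℝ)) (a), a ∈ T → (∀ x ∈ l, x ∈ T) →
      ∀ j, ∀ v ∈ μ j, (l.foldl (· * ·) a).mulVec v ∈ μ (j + l.length + 1) := by
  intro l
  induction l using List.reverseRecOn with
  | nil => intro a ha _ j v hv; simpa using hμ a ha j v hv
  | append_singleton L b ih =>
    intro a ha hl j v hv
    rw [List.foldl_append]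
    simp only [List.foldl_cons, List.foldl_nil]
    rw [← Matrix.mulVec_mulVec]
    have h1 := hμ b (hl b (by simp)) j v hv
    have h2 := ih a ha (fun x hx => hl x (by simp [hx])) (j + 1) _ h1
    have : j + 1 + L.length + 1 = j + (L ++ [b]).length + 1 := by simp; omega
    rwa [this] at h2

lemma Uchain_eq_bot_of_prodEq {S : Set (Matrix (Fin n) (Fin n) ℝ)} (hS : S ⊆ Qset n)
    {K : ℕ} (hK : 0 < K) (h : ProdEq (On n) S K) : Uchain S K = ⊥ := by
  -- U j ≤ span of products of length j applied to V
  set Z : ℕ → Submodule ℝ (Fin n → ℝ) := fun j =>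
    Submodule.span ℝ {x | ∃ (a : Matrix (Fin n) (Fin n) ℝ)
      (l : List (Matrix (Fin n) (Fin n) ℝ)) (v : Fin n → ℝ), a ∈ S ∧ (∀ b ∈ l, b ∈ S) ∧ l.length + 1 = j ∧
      v ∈ Vsub n ∧ x = (l.foldl (· * ·) a).mulVec v} with hZ
  have hUZ : ∀ j, 1 ≤ j → Uchain S j ≤ Z j := by
    intro j hj
    induction j with
    | zero => omega
    | succ j ih =>
      rcases Nat.eq_zero_or_pos j with rfl | hjpos
      · rw [Uchain_succ, Uchain_zero]
        apply stepU_le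
        rintro A hA x ⟨v, hv, rfl⟩
        apply Submodule.subset_span
        exact ⟨A, [], v, hA, by simp, by simp, hv, by simp [Matrix.mulVecLin_apply]⟩
      · rw [Uchain_succ]
        refine le_trans (stepU_mono S (ih hjpos)) ?_
        apply stepU_le
        intro A hA
        rw [hZ]
        rw [Submodule.map_span]
        apply Submodule.span_le.mpr
        rintro x ⟨y, ⟨a, l, v, ha, hl, hlen, hv, rfl⟩, rfl⟩
        apply Submodule.subset_span
        refine ⟨A, a :: l, v, hA, ?_, by simp [hlen], hv, ?_⟩
        · intro b hb
          rcases List.mem_cons.mp hb with rfl | hb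
          · exact ha
          · exact hl b hb
        · simp only [List.foldl_cons, Matrix.mulVecLin_apply]
          rw [foldl_mul_assoc, ← Matrix.mulVec_mulVec]
  have hZK : Z K = ⊥ := by
    rw [hZ, Submodule.span_eq_bot]
    rintro x ⟨a, l, v, ha, hl, hlen, hv, rfl⟩
    rw [h a l ha hl hlen, On_mulVec_eq_zero hv]
  exact le_bot_iff.mp (hZK ▸ hUZ K hK)

lemma Uchain_stab {S : Set (Matrix (Fin n) (Fin n) ℝ)} {j : ℕ}
    (h : Uchain S (j + 1) = Uchain S j) : ∀ i, Uchain S (j + i) = Uchain S j := by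
  intro i
  induction i with
  | zero => rfl
  | succ i ih =>
    have : j + (i + 1) = (j + i) + 1 := by omega
    rw [this, Uchain_succ, ih, ← Uchain_succ, h]

lemma Uchain_finrank {S : Set (Matrix (Fin n) (Fin n) ℝ)} (hS : S ⊆ Qset n)
    {K : ℕ} (hK : 0 < K) (h : ProdEq (On n) S K) (hn : 1 ≤ n) :
    ∀ j, Uchain S j = ⊥ ∨ finrank ℝ (Uchain S j) + j ≤ n - 1 := by
  have hbot := Uchain_eq_bot_of_prodEq hS hK h
  intro j
  induction j with
  | zero => right; rw [Uchain_zero, finrank_Vsub hn]; omega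
  | succ j ih =>
    rcases ih with hb | hr
    · left
      have : Uchain S (j+1) ≤ Uchain S j := Uchain_antitone hS j
      rw [hb] at this
      exact le_bot_iff.mp this
    · by_cases heq : Uchain S (j + 1) = Uchain S j
      · left
        have h1 := Uchain_stab heq (K + 1)
        have h2 : Uchain S (j + (K+1)) ≤ Uchain S K :=
          Uchain_le hS (by omega)
        rw [h1, hbot] at h2
        have hb : Uchain S j = ⊥ := le_bot_iff.mp h2
        rw [Uchain_succ, hb]
        apply le_bot_iff.mp
        apply stepU_le
        rintro A hA x ⟨v, hv, rfl⟩
        simp only [Submodule.mem_bot] at hv ⊢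
        rw [hv]; simp
      · right
        have hlt : Uchain S (j + 1) < Uchain S j :=
          lt_of_le_of_ne (Uchain_antitone hS j) heq
        have := Submodule.finrank_lt_finrank_of_lt hlt
        omega


lemma exists_intermediate (W₂ : Submodule ℝ (Fin n → ℝ)) :
    ∀ (d : ℕ) (W₁ : Submodule ℝ (Fin n → ℝ)), W₁ ≤ W₂ →
      finrank ℝ W₁ + d ≤ finrank ℝ W₂ →
      ∃ W, W₁ ≤ W ∧ W ≤ W₂ ∧ finrank ℝ W = finrank ℝ W₁ + d := by
  intro d
  induction d with
  | zero => intro W₁ h12 _; exact ⟨W₁, le_rfl, h12, by omega⟩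
  | succ d ih =>
    intro W₁ h12 h2
    have hlt : W₁ < W₂ := by
      rcases lt_or_eq_of_le h12 with hlt | rfl
      · exact hlt
      · omega
    obtain ⟨x, hxW₂, hxW₁⟩ := SetLike.exists_of_lt hlt
    have hx0 : x ≠ 0 := fun hx => hxW₁ (hx ▸ W₁.zero_mem)
    set W' := W₁ ⊔ Submodule.span ℝ {x} with hW'
    have hW'le : W' ≤ W₂ :=
      sup_le h12 ((Submodule.span_singleton_le_iff_mem x W₂).mpr hxW₂)
    have hinf : W₁ ⊓ Submodule.span ℝ {x} = ⊥ := by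
      rw [eq_bot_iff]
      rintro y ⟨hy1, hy2⟩
      obtain ⟨c, rfl⟩ := Submodule.mem_span_singleton.mp hy2
      rcases eq_or_ne c 0 with rfl | hc
      · simp
      · exact absurd (by simpa [smul_smul, inv_mul_cancel₀ hc] using W₁.smul_mem c⁻¹ hy1) hxW₁
    have hfr : finrank ℝ W' = finrank ℝ W₁ + 1 := by
      have h3 := Submodule.finrank_sup_add_finrank_inf_eq W₁ (Submodule.span ℝ {x})
      rw [hinf, finrank_span_singleton hx0] at h3
      simpa using h3
    obtain ⟨W, hW1, hW2, hW3⟩ := ih W' hW'le (by omega)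
    exact ⟨W, le_trans le_sup_left hW1, hW2, by omega⟩

lemma exists_flag {S : Set (Matrix (Fin n) (Fin n) ℝ)} (hS : S ⊆ Qset n) {K : ℕ}
    (hK : 0 < K) (h : ProdEq (On n) S K) (hn : 2 ≤ n) :
    ∃ X : ℕ → Submodule ℝ (Fin n → ℝ),
      X 0 = ⊥ ∧ (∀ i, X i ≤ X (i + 1)) ∧ (∀ i, i ≤ n - 1 → finrank ℝ (X i) = i) ∧
      (∀ i, n - 1 ≤ i → X i = Vsub n) ∧
      (∀ A ∈ S, ∀ i, ∀ v ∈ X (i + 1), A.mulVec v ∈ X i) := by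
  set m := n - 1 with hm
  have hm1 : 1 ≤ m := by omega
  have hn1 : 1 ≤ n := by omega
  have hd0 : finrank ℝ (Uchain S 0) = m := by rw [Uchain_zero]; exact finrank_Vsub hn1
  have hdmono : ∀ {j k}, j ≤ k → finrank ℝ (Uchain S k) ≤ finrank ℝ (Uchain S j) := by
    intro j k hjk
    exact Submodule.finrank_mono (Uchain_le hS hjk)
  have hdj : ∀ j, 1 ≤ finrank ℝ (Uchain S j) → finrank ℝ (Uchain S j) + j ≤ m := by
    intro j hj
    rcases Uchain_finrank hS hK h hn1 j with hb | hr
    · rw [hb] at hj; simp at hj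
    · exact hr
  set t : ℕ → ℕ := fun i => sSup {j | i ≤ finrank ℝ (Uchain S j)} with ht
  have htbdd : ∀ i : ℕ, 1 ≤ i → BddAbove {j | i ≤ finrank ℝ (Uchain S j)} := by
    intro i hi
    refine ⟨m, fun j hj => ?_⟩
    have := hdj j (le_trans hi hj)
    omega
  have htne : ∀ i, i ≤ m → {j | i ≤ finrank ℝ (Uchain S j)}.Nonempty :=
    fun i hi => ⟨0, by simp only [Set.mem_setOf_eq, hd0]; omega⟩
  have ht1 : ∀ i, 1 ≤ i → i ≤ m → i ≤ finrank ℝ (Uchain S (t i)) := by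
    intro i hi him
    exact Nat.sSup_mem (htne i him) (htbdd i hi)
  have ht2 : ∀ i, 1 ≤ i → i ≤ m → finrank ℝ (Uchain S (t i + 1)) < i := by
    intro i hi him
    by_contra hcon
    have hmem : t i + 1 ∈ {j | i ≤ finrank ℝ (Uchain S j)} := by
      simp only [Set.mem_setOf_eq]; omega
    have h2 : t i + 1 ≤ t i := le_csSup (htbdd i hi) hmem
    omega
  have ht3 : ∀ i i', 1 ≤ i → i ≤ i' → i' ≤ m → t i' ≤ t i := by
    intro i i' hi hii' him
    have hmem : t i' ∈ {j | i ≤ finrank ℝ (Uchain S j)} := by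
      have := ht1 i' (by omega) him
      simp only [Set.mem_setOf_eq]
      omega
    exact le_csSup (htbdd i hi) hmem
  -- key inclusion lemma
  have key : ∀ (X : ℕ → Submodule ℝ (Fin n → ℝ)) (i : ℕ), i + 1 ≤ m → X 0 = ⊥ →
      finrank ℝ (X i) = i → (1 ≤ i → X i ≤ Uchain S (t i) ∧ Uchain S (t i + 1) ≤ X i) →
      Uchain S (t (i + 1) + 1) ≤ X i := by
    intro X i him hX0 hXfr hXinv
    have hds1 : finrank ℝ (Uchain S (t (i + 1) + 1)) < i + 1 := ht2 (i + 1) (by omega) him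
    rcases Nat.eq_zero_or_pos i with rfl | hipos
    · have h0 : finrank ℝ (Uchain S (t (0 + 1) + 1)) = 0 := by omega
      have hb : Uchain S (t (0 + 1) + 1) = ⊥ := Submodule.finrank_eq_zero.mp h0
      rw [hX0, hb]
    · obtain ⟨hXle, hXge⟩ := hXinv hipos
      have hst : t (i + 1) ≤ t i := ht3 i (i + 1) hipos (by omega) him
      rcases Nat.lt_or_ge (t (i+1) + 1) (t i + 1) with hcase | hcase
      · -- t(i+1)+1 ≤ t i
        have h1 : Uchain S (t i) ≤ Uchain S (t (i + 1) + 1) := Uchain_le hS (by omega)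
        have h2 : X i ≤ Uchain S (t (i + 1) + 1) := le_trans hXle h1
        have h3 : finrank ℝ (Uchain S (t (i + 1) + 1)) ≥ finrank ℝ (Uchain S (t i)) :=
          hdmono (by omega)
        have h4 : i ≤ finrank ℝ (Uchain S (t i)) := ht1 i hipos (by omega)
        have heq : X i = Uchain S (t (i + 1) + 1) := by
          apply Submodule.eq_of_le_of_finrank_le h2
          rw [hXfr]
          omega
        rw [← heq]
      · -- t(i+1) = t i
        have : t (i + 1) = t i := by omega
        rw [this]
        exact hXge
  -- construct partial flags by induction
  have constr : ∀ r, r ≤ m → ∃ X : ℕ → Submodule ℝ (Fin n → ℝ),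
      X 0 = ⊥ ∧ (∀ j, j < r → X j ≤ X (j + 1)) ∧ (∀ j, j ≤ r → finrank ℝ (X j) = j) ∧
      (∀ j, 1 ≤ j → j ≤ r → X j ≤ Uchain S (t j) ∧ Uchain S (t j + 1) ≤ X j) := by
    intro r
    induction r with
    | zero =>
      intro _
      exact ⟨fun _ => ⊥, rfl, by omega, by intro j hj; interval_cases j; simp, by omega⟩
    | succ r ih =>
      intro hrm
      obtain ⟨X, hX0, hXmono, hXfr, hXinv⟩ := ih (by omega)
      -- build X (r+1) between X r and Uchain S (t (r+1))
      have hXrle : X r ≤ Uchain S (t (r + 1)) := by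
        rcases Nat.eq_zero_or_pos r with rfl | hrpos
        · rw [hX0]; exact bot_le
        · exact le_trans (hXinv r hrpos (by omega)).1
            (Uchain_le hS (ht3 r (r+1) hrpos (by omega) hrm))
      have hfr1 : finrank ℝ (X r) + (r + 1 - r) ≤ finrank ℝ (Uchain S (t (r + 1))) := by
        have := ht1 (r + 1) (by omega) hrm
        rw [hXfr r (by omega)]
        omega
      obtain ⟨W, hW1, hW2, hW3⟩ :=
        exists_intermediate (Uchain S (t (r + 1))) (r + 1 - r) (X r) hXrle hfr1
      set X' : ℕ → Submodule ℝ (Fin n → ℝ) := fun j => if j ≤ r then X j else W with hX'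
      have hX'eq : ∀ j, j ≤ r → X' j = X j := fun j hj => by simp [hX', hj]
      have hX'r1 : X' (r + 1) = W := by simp [hX']
      refine ⟨X', by rw [hX'eq 0 (by omega), hX0], ?_, ?_, ?_⟩
      · intro j hj
        rcases Nat.lt_or_ge j r with hjr | hjr
        · rw [hX'eq j (by omega), hX'eq (j+1) (by omega)]
          exact hXmono j hjr
        · have : j = r := by omega
          subst this
          rw [hX'eq j le_rfl, hX'r1]
          exact hW1
      · intro j hj
        rcases Nat.lt_or_ge j (r + 1) with hjr | hjr
        · rw [hX'eq j (by omega)]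
          exact hXfr j (by omega)
        · have : j = r + 1 := by omega
          subst this
          rw [hX'r1, hW3, hXfr r le_rfl]
          omega
      · intro j hj1 hjr
        rcases Nat.lt_or_ge j (r + 1) with hjlt | hjge
        · rw [hX'eq j (by omega)]
          exact hXinv j hj1 (by omega)
        · have : j = r + 1 := by omega
          subst this
          rw [hX'r1]
          constructor
          · exact hW2
          · -- Uchain S (t (r+1) + 1) ≤ W : via key applied at index r, then ≤ W
            refine le_trans (key X r ?_ hX0 (hXfr r le_rfl) (fun hr1 => hXinv r hr1 (by omega))) hW1
            omega
  obtain ⟨X, hX0, hXmono, hXfr, hXinv⟩ := constr m le_rfl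
  have hXm : X m = Vsub n := by
    have h1 : X m ≤ Vsub n := by
      rcases Nat.eq_zero_or_pos m with hm0 | hmpos
      · omega
      · exact le_trans (hXinv m hm1 le_rfl).1 (le_trans (Uchain_le hS (Nat.zero_le _))
          (by rw [Uchain_zero]))
    apply Submodule.eq_of_le_of_finrank_le h1
    rw [hXfr m le_rfl, finrank_Vsub hn1]
  set Xf : ℕ → Submodule ℝ (Fin n → ℝ) := fun i => if i ≤ m then X i else Vsub n with hXf
  have hXfeq : ∀ i, i ≤ m → Xf i = X i := fun i hi => by simp [hXf, hi]
  have hXfV : ∀ i, m ≤ i → Xf i = Vsub n := by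
    intro i hi
    rcases Nat.lt_or_ge m i with hlt | hge
    · simp [hXf, Nat.not_le.mpr hlt]
    · have hieq : i = m := by omega
      rw [hieq, hXfeq m le_rfl, hXm]
  refine ⟨Xf, by rw [hXfeq 0 (by omega), hX0], ?_, ?_, hXfV, ?_⟩
  · intro i
    rcases Nat.lt_or_ge i m with hlt | hge
    · rw [hXfeq i (by omega), hXfeq (i+1) (by omega)]
      exact hXmono i hlt
    · rw [hXfV i hge, hXfV (i+1) (by omega)]
  · intro i hi
    rw [hXfeq i hi]
    exact hXfr i hi
  · intro A hA i v hv
    rcases Nat.lt_or_ge (i + 1) (m + 1) with hlt | hge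
    · -- i + 1 ≤ m
      have hi1m : i + 1 ≤ m := by omega
      rw [hXfeq (i+1) hi1m] at hv
      rw [hXfeq i (by omega)]
      have hvU : v ∈ Uchain S (t (i + 1)) := by
        rcases Nat.eq_zero_or_pos (i+1) with h0 | hpos
        · omega
        · exact (hXinv (i+1) (by omega) hi1m).1 hv
      have hAv : A.mulVec v ∈ Uchain S (t (i + 1) + 1) := by
        rw [Uchain_succ]
        exact mem_stepU hA hvU
      exact key X i hi1m hX0 (hXfr i (by omega)) (fun hi1 => hXinv i hi1 (by omega)) hAv
    · -- i ≥ m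
      rw [hXfV (i+1) (by omega)] at hv
      rw [hXfV i (by omega)]
      exact Qmem_mulVec_mem_Vsub (hS hA) hv

def IsFlag (n : ℕ) (X : ℕ → Submodule ℝ (Fin n → ℝ)) : Prop :=
  X 0 = ⊥ ∧ (∀ i, X i ≤ X (i + 1)) ∧ (∀ i, i ≤ n - 1 → finrank ℝ (X i) = i) ∧
    (∀ i, n - 1 ≤ i → X i = Vsub n)

lemma IsFlag.mono {X : ℕ → Submodule ℝ (Fin n → ℝ)} (hX : IsFlag n X) {i j : ℕ}
    (hij : i ≤ j) : X i ≤ X j := by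
  induction j with
  | zero => simp_all
  | succ j ih =>
    rcases Nat.lt_or_ge i (j + 1) with hlt | hge
    · exact le_trans (ih (by omega)) (hX.2.1 j)
    · have : i = j + 1 := by omega
      rw [this]

lemma ones_not_mem_Vsub (hn : 1 ≤ n) : (fun _ => (1:ℝ)) ∉ Vsub n := by
  intro hmem
  have : ∑ _i : Fin n, (1:ℝ) = 0 := hmem
  simp at this
  omega

lemma flag_basis {X : ℕ → Submodule ℝ (Fin n → ℝ)} (hX : IsFlag n X) (hn : 2 ≤ n) :
    ∃ w : Fin n → (Fin n → ℝ),
      LinearIndependent ℝ w ∧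
      (∀ i : Fin n, (i : ℕ) < n - 1 → w i ∈ X ((i : ℕ) + 1) ∧ w i ∉ X (i : ℕ)) ∧
      (∀ i : Fin n, (i : ℕ) = n - 1 → w i = fun _ => 1) ∧
      (∀ k, k ≤ n - 1 → Submodule.span ℝ (w '' {i : Fin n | (i : ℕ) < k}) = X k) := by
  set m := n - 1 with hm
  obtain ⟨hX0, hXmono, hXfr, hXV⟩ := hX
  have hXlt : ∀ i, i < m → ∃ x, x ∈ X (i + 1) ∧ x ∉ X i := by
    intro i hi
    apply SetLike.exists_of_lt
    apply lt_of_le_of_ne (hXmono i)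
    intro heq
    have h1 := hXfr i (by omega)
    have h2 := hXfr (i + 1) (by omega)
    rw [heq] at h1
    omega
  set w : Fin n → (Fin n → ℝ) := fun i =>
    if h : (i : ℕ) < m then Classical.choose (hXlt i h) else fun _ => 1 with hw
  have hwmem : ∀ i : Fin n, (i : ℕ) < m → w i ∈ X ((i : ℕ) + 1) ∧ w i ∉ X (i : ℕ) := by
    intro i hi
    simp only [hw, dif_pos hi]
    exact Classical.choose_spec (hXlt i hi)
  have hwlast : ∀ i : Fin n, (i : ℕ) = m → w i = fun _ => 1 := by
    intro i hi
    have hnotlt : ¬ (i : ℕ) < m := by omega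
    simp only [hw]
    rw [dif_neg hnotlt]
  -- extended chain
  set Y : ℕ → Submodule ℝ (Fin n → ℝ) := fun j => if j ≤ m then X j else ⊤ with hY
  have hYmono : ∀ {j k}, j ≤ k → Y j ≤ Y k := by
    intro j k hjk
    simp only [hY]
    by_cases hj : j ≤ m
    · by_cases hk : k ≤ m
      · simp only [if_pos hj, if_pos hk]
        exact IsFlag.mono ⟨hX0, hXmono, hXfr, hXV⟩ hjk
      · simp only [if_pos hj, if_neg hk]; exact le_top
    · have hk' : ¬ k ≤ m := by omega
      simp only [if_neg hj, if_neg hk']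
      exact le_rfl
  have hwY : ∀ i : Fin n, w i ∈ Y ((i : ℕ) + 1) ∧ w i ∉ Y (i : ℕ) := by
    intro i
    have hin : (i : ℕ) < n := i.isLt
    rcases Nat.lt_or_ge (i : ℕ) m with hi | hi
    · obtain ⟨h1, h2⟩ := hwmem i hi
      constructor
      · simpa only [hY, if_pos (show (i : ℕ) + 1 ≤ m by omega)] using h1
      · simpa only [hY, if_pos (show (i : ℕ) ≤ m by omega)] using h2
    · have him : (i : ℕ) = m := by omega
      rw [hwlast i him, him]
      constructor
      · simp only [hY, if_neg (show ¬ m + 1 ≤ m by omega)]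
        exact Submodule.mem_top
      · simp only [hY, if_pos le_rfl, hXV m le_rfl]
        exact ones_not_mem_Vsub (by omega)
  have hprefix : ∀ k (hk : k ≤ n),
      LinearIndependent ℝ (fun i : Fin k => w (Fin.castLE hk i)) := by
    intro k
    induction k with
    | zero => intro hk; exact linearIndependent_empty_type
    | succ k ih =>
      intro hk
      have hkn : k ≤ n := by omega
      have hsnoc : (fun i : Fin (k + 1) => w (Fin.castLE hk i))
          = Fin.snoc (fun i : Fin k => w (Fin.castLE hkn i)) (w ⟨k, by omega⟩) := by
        funext i
        induction i using Fin.lastCases with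
        | last => rw [Fin.snoc_last]; congr 1
        | cast j => rw [Fin.snoc_castSucc]; congr 1
      rw [hsnoc, linearIndependent_fin_snoc]
      refine ⟨ih hkn, ?_⟩
      intro hmem
      have hspan : Submodule.span ℝ (Set.range fun i : Fin k => w (Fin.castLE hkn i)) ≤ Y k := by
        rw [Submodule.span_le]
        rintro x ⟨j, rfl⟩
        exact hYmono (show ((Fin.castLE hkn j : Fin n) : ℕ) + 1 ≤ k by
          have := j.isLt
          simp only [Fin.coe_castLE]
          omega) (hwY _).1
      exact (hwY ⟨k, by omega⟩).2 (hspan hmem)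
  have hwindep : LinearIndependent ℝ w := by
    have h1 := hprefix n le_rfl
    have h2 : (fun i : Fin n => w (Fin.castLE le_rfl i)) = w := by
      funext i
      congr 1
    rwa [h2] at h1
  have hrange : ∀ k (hk : k ≤ n),
      Set.range (fun i : Fin k => w (Fin.castLE hk i)) = w '' {i : Fin n | (i : ℕ) < k} := by
    intro k hk
    ext x
    constructor
    · rintro ⟨j, rfl⟩
      exact ⟨Fin.castLE hk j, by simpa using j.isLt, rfl⟩
    · rintro ⟨i, hi, rfl⟩
      refine ⟨⟨(i : ℕ), hi⟩, ?_⟩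
      congr 1
  have hspanp : ∀ k, k ≤ m → Submodule.span ℝ (w '' {i : Fin n | (i : ℕ) < k}) = X k := by
    intro k hk
    have hkn : k ≤ n := by omega
    have hle : Submodule.span ℝ (w '' {i : Fin n | (i : ℕ) < k}) ≤ X k := by
      rw [Submodule.span_le]
      rintro x ⟨i, hi, rfl⟩
      have := (hwY i).1
      have h2 : Y ((i : ℕ) + 1) ≤ Y k := hYmono (by simpa using hi)
      have h3 := h2 this
      simpa only [hY, if_pos hk, SetLike.mem_coe] using h3
    have hfr1 : finrank ℝ (Submodule.span ℝ (w '' {i : Fin n | (i : ℕ) < k})) = k := by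
      rw [← hrange k hkn, finrank_span_eq_card (hprefix k hkn)]
      simp
    exact Submodule.eq_of_le_of_finrank_le hle (by rw [hXfr k hk, hfr1])
  exact ⟨w, hwindep, hwmem, hwlast, hspanp⟩

/-- The maximal nilpotent subsemigroup attached to a complete flag. -/
def NF (n : ℕ) (X : ℕ → Submodule ℝ (Fin n → ℝ)) : Set (Matrix (Fin n) (Fin n) ℝ) :=
  {A | A ∈ Qset n ∧ ∀ i : ℕ, ∀ v ∈ X (i + 1), A.mulVec v ∈ X i}

lemma foldl_mem_Qset {l : List (Matrix (Fin n) (Fin n) ℝ)} {a : Matrix (Fin n) (Fin n) ℝ}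
    (ha : a ∈ Qset n) (hl : ∀ x ∈ l, x ∈ Qset n) : l.foldl (· * ·) a ∈ Qset n := by
  induction l generalizing a with
  | nil => simpa
  | cons b l ih =>
    exact ih (Qmul_mem ha (hl b (by simp))) (fun x hx => hl x (by simp [hx]))

lemma mulVec_toMatrix' (g : (Fin n → ℝ) →ₗ[ℝ] (Fin n → ℝ)) (x : Fin n → ℝ) :
    (LinearMap.toMatrix' g).mulVec x = g x := by
  rw [← Matrix.toLin'_apply, Matrix.toLin'_toMatrix']

lemma sum_eq_of_lin {g : (Fin n → ℝ) →ₗ[ℝ] (Fin n → ℝ)} (hn : 1 ≤ n)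
    (h1 : g (fun _ => 1) = fun _ => 1) (hV : ∀ v ∈ Vsub n, g v ∈ Vsub n) (x : Fin n → ℝ) :
    ∑ i, g x i = ∑ i, x i := by
  have h0 : (n : ℝ) ≠ 0 := by positivity
  set c : ℝ := (∑ i, x i) / n with hc
  have hv : (x - fun _ => c) ∈ Vsub n := by
    rw [mem_Vsub_iff]
    simp only [Pi.sub_apply]
    rw [Finset.sum_sub_distrib]
    simp [hc, Finset.sum_const, Finset.card_univ]
    field_simp
    ring
  have hgc : g (fun _ => c) = fun _ => c := by
    have hcc : (fun _ : Fin n => c) = c • (fun _ : Fin n => (1:ℝ)) := by funext i; simp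
    rw [hcc, _root_.map_smul, h1]
  have hx : x = (fun _ => c) + (x - fun _ => c) := by funext i; simp
  have hgx : g x = (fun _ => c) + g (x - fun _ => c) := by
    conv_lhs => rw [hx]
    rw [map_add, hgc]
  rw [hgx]
  simp only [Pi.add_apply]
  rw [Finset.sum_add_distrib, mem_Vsub_iff.mp (hV _ hv), add_zero]
  rw [Finset.sum_const, Finset.card_univ]
  simp [hc]
  field_simp

lemma toMatrix'_mem_Qset {g : (Fin n → ℝ) →ₗ[ℝ] (Fin n → ℝ)} (hn : 1 ≤ n)
    (h1 : g (fun _ => 1) = fun _ => 1) (hV : ∀ v ∈ Vsub n, g v ∈ Vsub n) :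
    LinearMap.toMatrix' g ∈ Qset n := by
  set A := LinearMap.toMatrix' g with hA
  constructor
  · intro i
    calc ∑ j, A i j = A.mulVec (fun _ => 1) i := by simp [Matrix.mulVec, dotProduct]
      _ = 1 := by rw [mulVec_toMatrix', h1]
  · intro j
    calc ∑ i, A i j = ∑ i, A.mulVec (Pi.single j 1) i := by
          simp [Matrix.mulVec_single]
      _ = ∑ i, g (Pi.single j 1) i := by rw [mulVec_toMatrix']
      _ = ∑ i, (Pi.single j 1 : Fin n → ℝ) i := sum_eq_of_lin hn h1 hV _
      _ = 1 := by simp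

lemma pow_mulVec (g : (Fin n → ℝ) →ₗ[ℝ] (Fin n → ℝ)) (k : ℕ) (x : Fin n → ℝ) :
    ((LinearMap.toMatrix' g) ^ k).mulVec x = (g ^ k) x := by
  induction k generalizing x with
  | zero => simp [Matrix.one_mulVec]
  | succ k ih =>
    rw [pow_succ, ← Matrix.mulVec_mulVec, mulVec_toMatrix', ih, pow_succ,
      Module.End.mul_apply]

lemma NF_nilIn {X : ℕ → Submodule ℝ (Fin n → ℝ)} (hX : IsFlag n X) (hn : 2 ≤ n) :
    NilIn (On n) (Qset n) (NF n X) ∧ ProdEq (On n) (NF n X) (n - 1) := by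
  obtain ⟨hX0, hXmono, hXfr, hXV⟩ := hX
  have hsub : NF n X ⊆ Qset n := fun A hA => hA.1
  have hsg : IsSubsg (NF n X) := by
    intro A hA B hB
    refine ⟨Qmul_mem hA.1 hB.1, ?_⟩
    intro i v hv
    rw [← Matrix.mulVec_mulVec]
    have hBv := hB.2 i v hv
    rcases Nat.eq_zero_or_pos i with rfl | hipos
    · rw [hX0] at hBv ⊢
      simp only [Submodule.mem_bot] at hBv ⊢
      rw [hBv, Matrix.mulVec_zero]
    · have h1 : B.mulVec v ∈ X ((i - 1) + 1) := by
        have : i - 1 + 1 = i := by omega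
        rw [this]; exact hBv
      exact IsFlag.mono ⟨hX0, hXmono, hXfr, hXV⟩ (by omega) (hA.2 (i-1) _ h1)
  have hprod : ProdEq (On n) (NF n X) (n - 1) := by
    intro a l ha hl hlen
    set m := n - 1 with hm
    have hμ : ∀ A ∈ NF n X, ∀ j, ∀ v ∈ X (m - j), A.mulVec v ∈ X (m - (j + 1)) := by
      intro A hA j v hv
      rcases Nat.eq_zero_or_pos (m - j) with h0 | hpos
      · rw [h0, hX0] at hv
        simp only [Submodule.mem_bot] at hv
        rw [hv, Matrix.mulVec_zero]
        have : m - (j + 1) = 0 := by omega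
        rw [this, hX0]
        exact Submodule.zero_mem _
      · have h1 : v ∈ X ((m - (j + 1)) + 1) := by
          have : m - (j + 1) + 1 = m - j := by omega
          rw [this]; exact hv
        exact hA.2 (m - (j+1)) v h1
    apply eq_On_of_killV (by omega) (foldl_mem_Qset (hsub ha) (fun x hx => hsub (hl x hx)))
    intro v hv
    have h0 : v ∈ X (m - 0) := by
      have : X m = Vsub n := hXV m le_rfl
      simpa [this] using hv
    have := foldl_mulVec_mem (μ := fun j => X (m - j)) hμ l a ha hl 0 v h0
    have h2 : (l.foldl (· * ·) a).mulVec v ∈ X (m - (0 + l.length + 1)) := this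
    have hbot : m - (0 + l.length + 1) = 0 := by omega
    rw [hbot, hX0] at h2
    simpa using h2
  exact ⟨⟨hsub, hsg, ⟨n - 1, by omega, hprod⟩⟩, hprod⟩

lemma exists_shift {X : ℕ → Submodule ℝ (Fin n → ℝ)} (hX : IsFlag n X) (hn : 3 ≤ n) :
    ∃ A ∈ NF n X, A ^ (n - 2) ≠ On n := by
  set m := n - 1 with hm
  obtain ⟨w, hwindep, hwmem, hwlast, hspan⟩ := flag_basis hX (by omega)
  obtain ⟨hX0, hXmono, hXfr, hXV⟩ := hX
  have hcard : Fintype.card (Fin n) = finrank ℝ (Fin n → ℝ) := by simp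
  have hne : Nonempty (Fin n) := ⟨⟨0, by omega⟩⟩
  set b := basisOfLinearIndependentOfCardEqFinrank hwindep hcard with hb
  have hbw : ∀ i, b i = w i := fun i => by
    rw [hb, coe_basisOfLinearIndependentOfCardEqFinrank]
  set tgt : Fin n → (Fin n → ℝ) := fun i =>
    if (i : ℕ) = m then (fun _ => 1) else if (i : ℕ) = 0 then 0
      else w ⟨(i : ℕ) - 1, by omega⟩ with htgt
  set g := b.constr ℝ tgt with hg
  have hgw : ∀ i, g (w i) = tgt i := fun i => by
    rw [← hbw i, hg, Basis.constr_basis]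
  -- mapping property of g on the flag
  have hstep : ∀ i : ℕ, ∀ v ∈ X (i + 1), g v ∈ X i := by
    have hcore : ∀ i : ℕ, i + 1 ≤ m → ∀ v ∈ X (i + 1), g v ∈ X i := by
      intro i hi v hv
      rw [← hspan (i+1) hi] at hv
      have hmap : Submodule.map g (Submodule.span ℝ (w '' {j : Fin n | (j : ℕ) < i + 1}))
          ≤ X i := by
        rw [Submodule.map_span, Submodule.span_le]
        rintro x ⟨y, ⟨j, hj, rfl⟩, rfl⟩
        simp only [Set.mem_setOf_eq] at hj
        rw [SetLike.mem_coe, hgw j]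
        simp only [htgt]
        have hjm : (j : ℕ) ≠ m := by omega
        rw [if_neg hjm]
        by_cases hj0 : (j : ℕ) = 0
        · rw [if_pos hj0]; exact Submodule.zero_mem _
        · rw [if_neg hj0]
          have h1 : w ⟨(j : ℕ) - 1, by omega⟩ ∈ X ((j : ℕ) - 1 + 1) :=
            (hwmem ⟨(j : ℕ) - 1, by omega⟩ (by simp; omega)).1
          exact IsFlag.mono ⟨hX0, hXmono, hXfr, hXV⟩ (by omega) h1
      exact hmap (Submodule.mem_map_of_mem hv)
    intro i v hv
    rcases Nat.lt_or_ge (i + 1) (m + 1) with hlt | hge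
    · exact hcore i (by omega) v hv
    · -- i ≥ m : X (i+1) = Vsub = X m, X i = Vsub
      have h1 : X (i + 1) = X m := by rw [hXV (i+1) (by omega), hXV m le_rfl]
      have h2 : X i = X m := by rw [hXV i (by omega), hXV m le_rfl]
      rw [h1] at hv
      rw [h2]
      have hmm : m - 1 + 1 = m := by omega
      have := hcore (m - 1) (by omega) v (by rw [hmm]; exact hv)
      exact IsFlag.mono ⟨hX0, hXmono, hXfr, hXV⟩ (by omega) this
  have hg1 : g (fun _ => 1) = fun _ => 1 := by
    have hml : ((⟨m, by omega⟩ : Fin n) : ℕ) = m := rfl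
    have h1 : w ⟨m, by omega⟩ = fun _ => 1 := hwlast _ hml
    rw [← h1, hgw]
    simp only [htgt]
    rw [if_pos trivial, h1]
  set A := LinearMap.toMatrix' g with hA
  have hAmv : ∀ x, A.mulVec x = g x := fun x => mulVec_toMatrix' g x
  have hAQ : A ∈ Qset n := by
    apply toMatrix'_mem_Qset (by omega) hg1
    intro v hv
    have h1 : v ∈ X m := by rw [hXV m le_rfl]; exact hv
    have h2 : v ∈ X (m - 1 + 1) := by rw [show m - 1 + 1 = m by omega]; exact h1
    have := hstep (m-1) v h2
    rw [← hXV m le_rfl]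
    exact IsFlag.mono ⟨hX0, hXmono, hXfr, hXV⟩ (by omega) this
  have hANF : A ∈ NF n X := ⟨hAQ, fun i v hv => by rw [hAmv]; exact hstep i v hv⟩
  refine ⟨A, hANF, ?_⟩
  -- compute powers on basis vectors
  have hpow : ∀ k j (hj : j < m) (hk : k ≤ j),
      (g ^ k) (w ⟨j, by omega⟩) = w ⟨j - k, by omega⟩ := by
    intro k
    induction k with
    | zero => intro j hj hk; simp
    | succ k ih =>
      intro j hj hk
      rw [pow_succ, Module.End.mul_apply]
      have hj0 : (j : ℕ) ≠ 0 := by omega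
      have hgwj : g (w ⟨j, by omega⟩) = w ⟨j - 1, by omega⟩ := by
        rw [hgw]
        have hco : ((⟨j, by omega⟩ : Fin n) : ℕ) = j := rfl
        simp only [htgt, hco]
        rw [if_neg (by omega : ¬ j = m), if_neg (by omega : ¬ j = 0)]
      rw [hgwj]
      have h3 := ih (j - 1) (by omega) (by omega)
      have h4 : (⟨j - 1 - k, by omega⟩ : Fin n) = ⟨j - (k + 1), by omega⟩ := by
        apply Fin.ext
        show j - 1 - k = j - (k + 1)
        omega
      rw [h3, h4]
  intro heq
  have hwm : w ⟨m - 1, by omega⟩ ∈ Vsub n := by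
    have h1 : w ⟨m - 1, by omega⟩ ∈ X (m - 1 + 1) :=
      (hwmem ⟨m - 1, by omega⟩ (by simp; omega)).1
    rw [show m - 1 + 1 = m by omega, hXV m le_rfl] at h1
    exact h1
  have h1 : (A ^ (n - 2)).mulVec (w ⟨m - 1, by omega⟩) = w ⟨0, by omega⟩ := by
    rw [hA, pow_mulVec]
    have h5 := hpow (n - 2) (m - 1) (by omega) (by omega)
    have h6 : (⟨m - 1 - (n - 2), by omega⟩ : Fin n) = (⟨0, by omega⟩ : Fin n) := by
      apply Fin.ext
      show m - 1 - (n - 2) = 0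
      omega
    rw [h5, h6]
  rw [heq, On_mulVec_eq_zero hwm] at h1
  have h2 : w ⟨0, by omega⟩ ∉ X 0 := (hwmem ⟨0, by omega⟩ (by simp; omega)).2
  rw [hX0] at h2
  exact h2 (by rw [← h1]; exact Submodule.zero_mem _)


lemma maximal_flag {T : Set (Matrix (Fin n) (Fin n) ℝ)}
    (hT : Maximal (NilIn (On n) (Qset n)) T) (hn : 2 ≤ n) :
    ∃ X, IsFlag n X ∧ T = NF n X := by
  obtain ⟨⟨hsub, hsg, K, hK, hprod⟩, hmax⟩ := hT
  obtain ⟨X, hX0, hXm, hXfr, hXV, hmap⟩ := exists_flag hsub hK hprod hn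
  have hflag : IsFlag n X := ⟨hX0, hXm, hXfr, hXV⟩
  have hTsub : T ⊆ NF n X := fun A hA => ⟨hsub hA, hmap A hA⟩
  have hNil : NilIn (On n) (Qset n) (NF n X) := (NF_nilIn hflag hn).1
  exact ⟨X, hflag, subset_antisymm hTsub (hmax hNil hTsub)⟩

lemma nilClass_NF {X : ℕ → Submodule ℝ (Fin n → ℝ)} (hX : IsFlag n X) (hn : 2 ≤ n) :
    nilClass (On n) (NF n X) = n - 1 := by
  obtain ⟨hNil, hprod⟩ := NF_nilIn hX hn
  have hsubQ : NF n X ⊆ Qset n := hNil.1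
  have hmmem : n - 1 ∈ {k | 0 < k ∧ ProdEq (On n) (NF n X) k} := ⟨by omega, hprod⟩
  have hnem : {k | 0 < k ∧ ProdEq (On n) (NF n X) k}.Nonempty := ⟨n - 1, hmmem⟩
  have hle : sInf {k | 0 < k ∧ ProdEq (On n) (NF n X) k} ≤ n - 1 := Nat.sInf_le hmmem
  obtain ⟨hpos, hprods⟩ := Nat.sInf_mem hnem
  rw [nilClass]
  by_contra hne'
  have hlt : sInf {k | 0 < k ∧ ProdEq (On n) (NF n X) k} < n - 1 := by omega
  have hn3 : 3 ≤ n := by omega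
  obtain ⟨A, hA, hApow⟩ := exists_shift hX hn3
  have hprodm1 : ProdEq (On n) (NF n X) (n - 2) :=
    ProdEq_mono hsubQ hpos (by omega) hprods
  have heq := hprodm1 A (List.replicate (n - 3) A) hA
    (fun x hx => by rw [List.eq_of_mem_replicate hx]; exact hA) (by simp; omega)
  rw [foldl_replicate] at heq
  rw [show n - 3 + 1 = n - 2 by omega] at heq
  exact hApow heq

lemma exists_conj {X₁ X₂ : ℕ → Submodule ℝ (Fin n → ℝ)} (hX1 : IsFlag n X₁)
    (hX2 : IsFlag n X₂) (hn : 2 ≤ n) :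
    ∃ f : Matrix (Fin n) (Fin n) ℝ → Matrix (Fin n) (Fin n) ℝ,
      Set.BijOn f (NF n X₁) (NF n X₂) ∧
      ∀ a b : Matrix (Fin n) (Fin n) ℝ, f (a * b) = f a * f b := by
  set m := n - 1 with hm
  obtain ⟨w, hwindep, hwmem, hwlast, hspan⟩ := flag_basis hX1 hn
  obtain ⟨w', hwindep', hwmem', hwlast', hspan'⟩ := flag_basis hX2 hn
  have hne : Nonempty (Fin n) := ⟨⟨0, by omega⟩⟩
  have hcard : Fintype.card (Fin n) = finrank ℝ (Fin n → ℝ) := by simp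
  set b := basisOfLinearIndependentOfCardEqFinrank hwindep hcard with hb
  set b' := basisOfLinearIndependentOfCardEqFinrank hwindep' hcard with hb'
  set e := b.equiv b' (Equiv.refl _) with he
  have hew : ∀ i, e (w i) = w' i := by
    intro i
    have h1 : b i = w i := by rw [hb, coe_basisOfLinearIndependentOfCardEqFinrank]
    have h2 : b' i = w' i := by rw [hb', coe_basisOfLinearIndependentOfCardEqFinrank]
    rw [← h1, ← h2, he, Basis.equiv_apply, Equiv.refl_apply]
  set f : (Fin n → ℝ) →ₗ[ℝ] (Fin n → ℝ) := e.toLinearMap with hf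
  set fs : (Fin n → ℝ) →ₗ[ℝ] (Fin n → ℝ) := e.symm.toLinearMap with hfs
  have hcomp1 : f ∘ₗ fs = LinearMap.id := by
    ext x
    simp [hf, hfs]
  have hcomp2 : fs ∘ₗ f = LinearMap.id := by
    ext x
    simp [hf, hfs]
  have hmapX : ∀ i, Submodule.map f (X₁ i) = X₂ i := by
    have hcore : ∀ i, i ≤ m → Submodule.map f (X₁ i) = X₂ i := by
      intro i hi
      rw [← hspan i hi, ← hspan' i hi, Submodule.map_span]
      congr 1
      rw [Set.image_image]
      exact Set.image_congr fun j _ => hew j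
    intro i
    rcases le_or_gt i m with hi | hi
    · exact hcore i hi
    · have hmm := hcore m le_rfl
      rw [hX1.2.2.2 m le_rfl, hX2.2.2.2 m le_rfl] at hmm
      rw [hX1.2.2.2 i (by omega), hX2.2.2.2 i (by omega)]
      exact hmm
  have hmapX' : ∀ i, Submodule.map fs (X₂ i) = X₁ i := by
    intro i
    rw [← hmapX i, ← Submodule.map_comp, hcomp2, Submodule.map_id]
  have he1 : f (fun _ => 1) = fun _ => 1 := by
    have h1 : w ⟨m, by omega⟩ = fun _ => 1 := hwlast _ rfl
    have h2 : w' ⟨m, by omega⟩ = fun _ => 1 := hwlast' _ rfl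
    have h3 := hew ⟨m, by omega⟩
    rw [h1, h2] at h3
    exact h3
  have hs1 : fs (fun _ => 1) = fun _ => 1 := by
    conv_lhs => rw [← he1]
    have : fs (f (fun _ => 1)) = (fs ∘ₗ f) (fun _ => 1) := rfl
    rw [this, hcomp2, LinearMap.id_apply]
  have hfV : ∀ v ∈ Vsub n, f v ∈ Vsub n := by
    intro v hv
    have h1 : v ∈ X₁ m := by rw [hX1.2.2.2 m le_rfl]; exact hv
    have h2 : f v ∈ Submodule.map f (X₁ m) := Submodule.mem_map_of_mem h1
    rw [hmapX m, hX2.2.2.2 m le_rfl] at h2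
    exact h2
  have hsV : ∀ v ∈ Vsub n, fs v ∈ Vsub n := by
    intro v hv
    have h1 : v ∈ X₂ m := by rw [hX2.2.2.2 m le_rfl]; exact hv
    have h2 : fs v ∈ Submodule.map fs (X₂ m) := Submodule.mem_map_of_mem h1
    rw [hmapX' m, hX1.2.2.2 m le_rfl] at h2
    exact h2
  set P := LinearMap.toMatrix' f with hP
  set Q := LinearMap.toMatrix' fs with hQ
  have hPQ : P * Q = 1 := by
    rw [hP, hQ, ← LinearMap.toMatrix'_comp, hcomp1, LinearMap.toMatrix'_id]
  have hQP : Q * P = 1 := by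
    rw [hP, hQ, ← LinearMap.toMatrix'_comp, hcomp2, LinearMap.toMatrix'_id]
  have hPmv : ∀ x, P.mulVec x = f x := mulVec_toMatrix' f
  have hQmv : ∀ x, Q.mulVec x = fs x := mulVec_toMatrix' fs
  have hPQs : P ∈ Qset n := toMatrix'_mem_Qset (by omega) he1 hfV
  have hQQs : Q ∈ Qset n := toMatrix'_mem_Qset (by omega) hs1 hsV
  have hmv3 : ∀ (B : Matrix (Fin n) (Fin n) ℝ) v,
      (P * B * Q).mulVec v = P.mulVec (B.mulVec (Q.mulVec v)) := by
    intro B v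
    rw [Matrix.mulVec_mulVec, Matrix.mulVec_mulVec, mul_assoc]
  have hmv3' : ∀ (B : Matrix (Fin n) (Fin n) ℝ) v,
      (Q * B * P).mulVec v = Q.mulVec (B.mulVec (P.mulVec v)) := by
    intro B v
    rw [Matrix.mulVec_mulVec, Matrix.mulVec_mulVec, mul_assoc]
  have hfwd : ∀ B ∈ NF n X₁, P * B * Q ∈ NF n X₂ := by
    rintro B ⟨hBQ, hBmap⟩
    refine ⟨Qmul_mem (Qmul_mem hPQs hBQ) hQQs, ?_⟩
    intro i v hv
    rw [hmv3]
    have h1 : Q.mulVec v ∈ X₁ (i + 1) := by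
      rw [hQmv, ← hmapX' (i + 1)]
      exact Submodule.mem_map_of_mem hv
    have h2 : B.mulVec (Q.mulVec v) ∈ X₁ i := hBmap i _ h1
    rw [hPmv, ← hmapX i]
    exact Submodule.mem_map_of_mem h2
  have hbwd : ∀ B ∈ NF n X₂, Q * B * P ∈ NF n X₁ := by
    rintro B ⟨hBQ, hBmap⟩
    refine ⟨Qmul_mem (Qmul_mem hQQs hBQ) hPQs, ?_⟩
    intro i v hv
    rw [hmv3']
    have h1 : P.mulVec v ∈ X₂ (i + 1) := by
      rw [hPmv, ← hmapX (i + 1)]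
      exact Submodule.mem_map_of_mem hv
    have h2 : B.mulVec (P.mulVec v) ∈ X₂ i := hBmap i _ h1
    rw [hQmv, ← hmapX' i]
    exact Submodule.mem_map_of_mem h2
  have hcanc1 : ∀ B : Matrix (Fin n) (Fin n) ℝ, Q * (P * B * Q) * P = B := by
    intro B
    calc Q * (P * B * Q) * P = (Q * P) * B * (Q * P) := by simp only [mul_assoc]
      _ = B := by rw [hQP, one_mul, mul_one]
  have hcanc2 : ∀ B : Matrix (Fin n) (Fin n) ℝ, P * (Q * B * P) * Q = B := by
    intro B
    calc P * (Q * B * P) * Q = (P * Q) * B * (P * Q) := by simp only [mul_assoc]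
      _ = B := by rw [hPQ, one_mul, mul_one]
  refine ⟨fun B => P * B * Q, ⟨?_, ?_, ?_⟩, ?_⟩
  · intro B hB
    exact hfwd B hB
  · intro a _ b _ hab
    have h1 := congrArg (fun M => Q * M * P) hab
    simp only at h1
    rwa [hcanc1, hcanc1] at h1
  · intro B hB
    exact ⟨Q * B * P, hbwd B hB, hcanc2 B⟩
  · intro a c
    show P * (a * c) * Q = (P * a * Q) * (P * c * Q)
    have h1 : Q * (P * (c * Q)) = c * Q := by
      rw [← mul_assoc, hQP, one_mul]
    simp only [mul_assoc]
    rw [h1]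


/-- Every maximal nilpotent subsemigroup of `Q_n` has nilpotency
class `n - 1`, and any two maximal nilpotent subsemigroups of `Q_n` are isomorphic
as semigroups. -/
theorem stmt14 (n : ℕ) (hn : 2 ≤ n) :
    (∀ T : Set (Matrix (Fin n) (Fin n) ℝ), Maximal (NilIn (On n) (Qset n)) T →
        nilClass (On n) T = n - 1) ∧
      ∀ T₁ T₂ : Set (Matrix (Fin n) (Fin n) ℝ),
        Maximal (NilIn (On n) (Qset n)) T₁ → Maximal (NilIn (On n) (Qset n)) T₂ →
        ∃ f : Matrix (Fin n) (Fin n) ℝ → Matrix (Fin n) (Fin n) ℝ,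
          Set.BijOn f T₁ T₂ ∧ ∀ a ∈ T₁, ∀ b ∈ T₁, f (a * b) = f a * f b := by
  constructor
  · intro T hT
    obtain ⟨X, hflag, rfl⟩ := maximal_flag hT hn
    exact nilClass_NF hflag hn
  · intro T₁ T₂ h1 h2
    obtain ⟨X₁, hf1, rfl⟩ := maximal_flag h1 hn
    obtain ⟨X₂, hf2, rfl⟩ := maximal_flag h2 hn
    obtain ⟨f, hbij, hmult⟩ := exists_conj hf1 hf2 hn
    exact ⟨f, hbij, fun a _ b _ => hmult a b⟩

end NilSg
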